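/- arXiv:2601.15343 — 3 statements merged into one kernel-verified Lean document; each statement's English description precedes it below -/
import Mathlib

section
/- Let H be a real Hilbert space, F : H → ℝ with gradient ∇F everywhere, Γ > 0, λ > 0, and p ∈ H with ∇F(p) = 0. Suppose ⟨∇F(x), x − p⟩ ≥ λ·‖x − p‖² for all x ∈ H. If σ : ℝ → H is differentiable with σ'(t) = −Γ·∇F(σ(t)) for all t ≥ 0, then ‖σ(t) − p‖ ≤ e^{−Γλt}·‖σ(0) − p‖ for all t ≥ 0. -/
open Real

/-- Exponential stability of a strictly stable equilibrium: if `∇F(p) = 0` and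
`⟨∇F(x), x − p⟩ ≥ λ‖x − p‖²` for all `x`, then every gradient-flow trajectory
`σ' = −Γ∇F(σ)` satisfies `‖σ(t) − p‖ ≤ e^{−Γλt}‖σ(0) − p‖` for `t ≥ 0`. -/
theorem exponential_stability_gradient_flow
    {H : Type*} [NormedAddCommGroup H] [InnerProductSpace ℝ H] [CompleteSpace H]
    (F : H → ℝ) (g : H → H) (hgrad : ∀ x, HasGradientAt F (g x) x)
    (Γ lam : ℝ) (hΓ : 0 < Γ) (hlam : 0 < lam)
    (p : H) (hp : g p = 0)
    (hmono : ∀ x : H, inner ℝ (g x) (x - p) ≥ lam * ‖x - p‖ ^ 2)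
    (σ : ℝ → H) (hflow : ∀ t : ℝ, 0 ≤ t → HasDerivAt σ (-(Γ • g (σ t))) t) :
    ∀ t : ℝ, 0 ≤ t → ‖σ t - p‖ ≤ Real.exp (-(Γ * lam * t)) * ‖σ 0 - p‖ := by
  set ψ : ℝ → ℝ :=
    (fun t => Real.exp (2 * Γ * lam * t) * (inner ℝ (σ t - p) (σ t - p) : ℝ)) with hψ
  have hderiv : ∀ t : ℝ, 0 ≤ t → HasDerivAt ψ
      (2 * Γ * lam * Real.exp (2 * Γ * lam * t) * (inner ℝ (σ t - p) (σ t - p) : ℝ)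
        + Real.exp (2 * Γ * lam * t) *
          ((inner ℝ (σ t - p) (-(Γ • g (σ t))) : ℝ)
            + (inner ℝ (-(Γ • g (σ t))) (σ t - p) : ℝ))) t := by
    intro t ht
    have h1 : HasDerivAt (fun t => σ t - p) (-(Γ • g (σ t))) t :=
      (hflow t ht).sub_const p
    have h2 : HasDerivAt (fun t => (inner ℝ (σ t - p) (σ t - p) : ℝ))
        ((inner ℝ (σ t - p) (-(Γ • g (σ t))) : ℝ)
          + (inner ℝ (-(Γ • g (σ t))) (σ t - p) : ℝ)) t :=
      h1.inner ℝ h1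
    have hlin : HasDerivAt (fun t : ℝ => 2 * Γ * lam * t) (2 * Γ * lam) t := by
      simpa using (hasDerivAt_id t).const_mul (2 * Γ * lam)
    have h3 := hlin.exp
    have h4 := h3.mul h2
    exact h4.congr_deriv (by ring)
  have hnonpos : ∀ t : ℝ, 0 ≤ t →
      (2 * Γ * lam * Real.exp (2 * Γ * lam * t) * (inner ℝ (σ t - p) (σ t - p) : ℝ)
        + Real.exp (2 * Γ * lam * t) *
          ((inner ℝ (σ t - p) (-(Γ • g (σ t))) : ℝ)
            + (inner ℝ (-(Γ • g (σ t))) (σ t - p) : ℝ))) ≤ 0 := by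
    intro t ht
    have hm := hmono (σ t)
    have hsq : (inner ℝ (σ t - p) (σ t - p) : ℝ) = ‖σ t - p‖ ^ 2 :=
      real_inner_self_eq_norm_sq _
    have hA : (inner ℝ (-(Γ • g (σ t))) (σ t - p) : ℝ)
        = -(Γ * (inner ℝ (g (σ t)) (σ t - p) : ℝ)) := by
      rw [inner_neg_left, real_inner_smul_left]
    have hB : (inner ℝ (σ t - p) (-(Γ • g (σ t))) : ℝ)
        = -(Γ * (inner ℝ (g (σ t)) (σ t - p) : ℝ)) := by
      rw [inner_neg_right, real_inner_smul_right, real_inner_comm]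
    rw [hA, hB, hsq]
    have hexp : 0 < Real.exp (2 * Γ * lam * t) := Real.exp_pos _
    nlinarith [mul_le_mul_of_nonneg_left hm (le_of_lt hΓ), hexp,
      mul_pos hΓ hlam]
  have hanti : AntitoneOn ψ (Set.Ici 0) := by
    apply antitoneOn_of_deriv_nonpos (convex_Ici 0)
    · exact fun t ht => ((hderiv t ht).continuousAt).continuousWithinAt
    · intro t ht
      rw [interior_Ici] at ht
      exact ((hderiv t (le_of_lt ht)).differentiableAt).differentiableWithinAt
    · intro t ht
      rw [interior_Ici] at ht
      rw [(hderiv t (le_of_lt ht)).deriv]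
      exact hnonpos t (le_of_lt ht)
  intro t ht
  have key : ψ t ≤ ψ 0 := hanti Set.self_mem_Ici ht ht
  have hsq : ∀ s : ℝ, (inner ℝ (σ s - p) (σ s - p) : ℝ) = ‖σ s - p‖ ^ 2 :=
    fun s => real_inner_self_eq_norm_sq _
  rw [hψ] at key
  simp only [hsq, mul_zero, Real.exp_zero, one_mul] at key
  have hexp : 0 < Real.exp (2 * Γ * lam * t) := Real.exp_pos _
  have h2 : ‖σ t - p‖ ^ 2 ≤ (Real.exp (-(Γ * lam * t)) * ‖σ 0 - p‖) ^ 2 := by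
    have he : (Real.exp (-(Γ * lam * t))) ^ 2 = (Real.exp (2 * Γ * lam * t))⁻¹ := by
      rw [← Real.exp_nat_mul, ← Real.exp_neg]
      congr 1
      push_cast
      ring
    rw [mul_pow, he]
    have h5 := mul_le_mul_of_nonneg_left key (inv_nonneg.mpr hexp.le)
    have h6 : (Real.exp (2 * Γ * lam * t))⁻¹ * Real.exp (2 * Γ * lam * t) = 1 :=
      inv_mul_cancel₀ (ne_of_gt hexp)
    nlinarith [h5, h6]
  have h7 := Real.sqrt_le_sqrt h2
  rwa [Real.sqrt_sq (norm_nonneg _), Real.sqrt_sq (by positivity)] at h7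
end

section
/- Let H be a real Hilbert space, F : H → ℝ bounded below with continuous gradient ∇F : H → H, Γ > 0, and let σ : ℝ → H be a differentiable curve with σ'(t) = −Γ·∇F(σ(t)) for all t ≥ 0. If the orbit {σ(t) : t ≥ 0} is relatively compact in H, then there exist a sequence t_n → ∞ and a point η ∈ H with σ(t_n) → η in H and ∇F(η) = 0. -/
open Filter Topology

/-- Stationarity in the ω-limit set: if `F` is bounded below with continuous
gradient `g = ∇F`, `σ' = −Γ∇F(σ)` for `t ≥ 0`, and the orbit `{σ(t) : t ≥ 0}` is
relatively compact, then some sequence `σ(tₙ)` with `tₙ → ∞` converges to a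
critical point `η` of `F`. -/
theorem omega_limit_contains_critical_point
    {H : Type*} [NormedAddCommGroup H] [InnerProductSpace ℝ H] [CompleteSpace H]
    (F : H → ℝ) (hbdd : BddBelow (Set.range F))
    (g : H → H) (hgrad : ∀ x, HasGradientAt F (g x) x) (hgcont : Continuous g)
    (Γ : ℝ) (hΓ : 0 < Γ)
    (σ : ℝ → H) (hflow : ∀ t : ℝ, 0 ≤ t → HasDerivAt σ (-(Γ • g (σ t))) t)
    (hcompact : IsCompact (closure (σ '' Set.Ici (0 : ℝ)))) :
    ∃ (t : ℕ → ℝ) (η : H), Tendsto t atTop atTop ∧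
      Tendsto (fun n => σ (t n)) atTop (𝓝 η) ∧ g η = 0 := by
  -- derivative of the energy along the flow
  have hφ : ∀ t : ℝ, 0 ≤ t →
      HasDerivAt (fun s => F (σ s)) (-(Γ * ‖g (σ t)‖ ^ 2)) t := by
    intro t ht
    have h1 := ((hgrad (σ t)).hasFDerivAt).comp_hasDerivAt t (hflow t ht)
    refine HasDerivAt.congr_deriv h1 ?_
    simp only [InnerProductSpace.toDual_apply_apply, inner_neg_right, real_inner_smul_right,
      real_inner_self_eq_norm_sq]
  -- lower bound for the energy
  obtain ⟨m, hm⟩ := hbdd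
  have hFm : ∀ x, m ≤ F x := fun x => hm (Set.mem_range_self x)
  -- key dissipation estimate: if ‖g(σ s)‖² ≥ δ for all s ∈ [a, b], then
  -- F(σ b) ≤ F(σ a) - Γ δ (b - a)
  have key : ∀ a b δ : ℝ, 0 ≤ a → a ≤ b →
      (∀ s, a ≤ s → ‖g (σ s)‖ ^ 2 ≥ δ) →
      F (σ b) ≤ F (σ a) - Γ * δ * (b - a) := by
    intro a b δ ha hab hδ
    set ψ : ℝ → ℝ := fun s => F (σ s) + Γ * δ * s with hψdef
    have hder : ∀ s, a ≤ s → HasDerivAt ψ (-(Γ * ‖g (σ s)‖ ^ 2) + Γ * δ * 1) s :=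
      fun s hs => (hφ s (le_trans ha hs)).add ((hasDerivAt_id s).const_mul (Γ * δ))
    have hanti : AntitoneOn ψ (Set.Ici a) := by
      refine antitoneOn_of_deriv_nonpos (convex_Ici a)
        (fun s hs => ((hder s hs).continuousAt).continuousWithinAt) ?_ ?_
      · intro s hs
        rw [interior_Ici] at hs
        exact ((hder s (le_of_lt hs)).differentiableAt).differentiableWithinAt
      · intro s hs
        rw [interior_Ici] at hs
        rw [(hder s (le_of_lt hs)).deriv]
        have := hδ s (le_of_lt hs)
        nlinarith
    have := hanti (Set.self_mem_Ici) (Set.mem_Ici.mpr hab) hab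
    simp only [hψdef] at this
    linarith
  -- existence of times with small gradient
  have hsmall : ∀ n : ℕ, ∃ s : ℝ, (n : ℝ) ≤ s ∧ ‖g (σ s)‖ ≤ 1 / (n + 1) := by
    intro n
    by_contra hcon
    push_neg at hcon
    have hδ : ∀ s, (n : ℝ) ≤ s → ‖g (σ s)‖ ^ 2 ≥ (1 / (n + 1 : ℝ)) ^ 2 := by
      intro s hs
      have h := le_of_lt (hcon s hs)
      have h0 : (0 : ℝ) ≤ 1 / (n + 1 : ℝ)  := by positivity
      nlinarith [norm_nonneg (g (σ s))]
    set δ := (1 / (n + 1 : ℝ)) ^ 2 with hδdef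
    have hδpos : 0 < δ := by positivity
    -- pick b large enough to contradict the lower bound
    obtain ⟨b, hb1, hb2⟩ : ∃ b : ℝ, (n : ℝ) ≤ b ∧
        F (σ n) - Γ * δ * (b - n) < m := by
      refine ⟨(n : ℝ) + (F (σ n) - m + 1) / (Γ * δ), ?_, ?_⟩
      · have : 0 ≤ (F (σ n) - m + 1) / (Γ * δ) := by
          apply div_nonneg _ (le_of_lt (mul_pos hΓ hδpos))
          have := hFm (σ n); linarith
        linarith
      · rw [add_sub_cancel_left]
        rw [mul_div_cancel₀ _ (ne_of_gt (mul_pos hΓ hδpos))]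
        linarith
    have := key n b δ (Nat.cast_nonneg n) hb1 hδ
    have := hFm (σ b)
    linarith
  choose t ht1 ht2 using hsmall
  -- extract a convergent subsequence by compactness
  have hmem : ∀ n, σ (t n) ∈ closure (σ '' Set.Ici (0 : ℝ)) := by
    intro n
    exact subset_closure ⟨t n, le_trans (Nat.cast_nonneg n) (ht1 n), rfl⟩
  obtain ⟨η, -, φ, hφmono, hφlim⟩ := hcompact.tendsto_subseq hmem
  refine ⟨fun n => t (φ n), η, ?_, hφlim, ?_⟩
  · apply tendsto_atTop_mono (fun n => ?_) tendsto_natCast_atTop_atTop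
    calc ((n : ℕ) : ℝ) ≤ (φ n : ℝ) := Nat.cast_le.mpr (hφmono.id_le n)
      _ ≤ t (φ n) := ht1 (φ n)
  · -- g η = 0 since ‖g(σ (t (φ n)))‖ ≤ 1/(φ n + 1) → 0
    have hlim1 : Tendsto (fun n => g (σ (t (φ n)))) atTop (𝓝 (g η)) :=
      (hgcont.continuousAt.tendsto).comp hφlim
    have hlim2 : Tendsto (fun n => ‖g (σ (t (φ n)))‖) atTop (𝓝 0) := by
      apply squeeze_zero (fun n => norm_nonneg _) (fun n => ht2 (φ n))
      have : Tendsto (fun n : ℕ => 1 / ((φ n : ℝ) + 1)) atTop (𝓝 0) := by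
        apply Tendsto.comp tendsto_one_div_add_atTop_nhds_zero_nat
          (StrictMono.tendsto_atTop hφmono)
      exact this
    have : ‖g η‖ = 0 := tendsto_nhds_unique (hlim1.norm) hlim2
    simpa using this
end

section
/- Let H be a real Hilbert space, F : H → ℝ, and let σ : [0, ∞) → H be differentiable with σ'(t) = −∇F(σ(t)) for all t ≥ 0, where F has gradient ∇F(σ(t)) at each σ(t). Suppose there are constants θ ∈ (0, 1/2], C > 0 and F_∞ ∈ ℝ such that F(σ(t)) ≥ F_∞ and (F(σ(t)) − F_∞)^{1−θ} ≤ C·‖∇F(σ(t))‖ for all t ≥ 0. Then ∫₀^∞ ‖σ'(t)‖ dt ≤ (C/θ)·(F(σ(0)) − F_∞)^θ < ∞, and consequently σ(t) converges in H to some limit η as t → ∞. -/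
open Filter Topology MeasureTheory

lemma lemA (f f' u : ℝ → ℝ) (a b : ℝ) (hab : a ≤ b)
    (hcont : ContinuousOn f (Set.Icc a (b+1)))
    (hanti : AntitoneOn f (Set.Icc a (b+1)))
    (hderiv : ∀ t ∈ Set.Icc a b, HasDerivAt f (f' t) t)
    (hu_nonneg : ∀ t ∈ Set.Icc a b, 0 ≤ u t)
    (hu_le : ∀ t ∈ Set.Icc a b, u t ≤ -f' t) :
    ∫⁻ t in Set.Icc a b, ENNReal.ofReal (u t) ≤ ENNReal.ofReal (f a - f b) := by
  set h : ℕ → ℝ := fun n => ((n : ℝ) + 1)⁻¹ with hh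
  have hpos : ∀ n, 0 < h n := fun n => by positivity
  have hle1 : ∀ n, h n ≤ 1 := by
    intro n
    rw [hh]
    simp only []
    rw [inv_le_one_iff₀]
    right; linarith [Nat.cast_nonneg (α := ℝ) n]
  have htend : Tendsto h atTop (𝓝 0) := by
    have := tendsto_one_div_add_atTop_nhds_zero_nat (𝕜 := ℝ)
    simpa [hh, one_div] using this
  set q : ℕ → ℝ → ℝ := fun n t => ((n : ℝ) + 1) * (f t - f (t + h n)) with hq
  -- membership helpers
  have hmem : ∀ t ∈ Set.Icc a b, ∀ n, t + h n ∈ Set.Icc a (b+1) := by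
    intro t ht n
    constructor
    · linarith [ht.1, (hpos n).le]
    · linarith [ht.2, hle1 n]
  have hmem' : ∀ t ∈ Set.Icc a b, t ∈ Set.Icc a (b+1) := by
    intro t ht; exact ⟨ht.1, by linarith [ht.2]⟩
  -- pointwise limit
  have hpt : ∀ t ∈ Set.Icc a b, Tendsto (fun n => q n t) atTop (𝓝 (-f' t)) := by
    intro t ht
    have hd := (hderiv t ht)
    rw [hasDerivAt_iff_tendsto_slope] at hd
    have hseq : Tendsto (fun n => t + h n) atTop (𝓝[≠] t) := by
      rw [tendsto_nhdsWithin_iff]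
      constructor
      · simpa using (tendsto_const_nhds.add htend)
      · exact Eventually.of_forall fun n => by
          simp only [Set.mem_compl_iff, Set.mem_singleton_iff]
          intro hcontra
          have := hpos n; linarith [congrArg (fun x => x - t) hcontra]
    have := hd.comp hseq
    have heq : ∀ n, slope f t (t + h n) = -(q n t) := by
      intro n
      rw [slope_def_field, hq]
      simp only [hh]
      rw [add_sub_cancel_left, div_eq_mul_inv, inv_inv]
      ring
    have h2 : Tendsto (fun n => -(q n t)) atTop (𝓝 (f' t)) := by
      refine this.congr fun n => ?_
      simp only [Function.comp]
      exact heq n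
    have := h2.neg
    simpa using this
  -- continuity facts
  have hsub : Set.Icc a b ⊆ Set.Icc a (b+1) := Set.Icc_subset_Icc_right (by linarith)
  have contf : ContinuousOn f (Set.Icc a b) := hcont.mono hsub
  have contshift : ∀ n, ContinuousOn (fun t => f (t + h n)) (Set.Icc a b) := by
    intro n
    exact hcont.comp ((continuous_id.add continuous_const).continuousOn)
      (fun t ht => hmem t ht n)
  have contq : ∀ n, ContinuousOn (q n) (Set.Icc a b) := by
    intro n
    exact (continuousOn_const.mul ((contf.sub (contshift n))))
  have hq_nonneg : ∀ n, ∀ t ∈ Set.Icc a b, 0 ≤ q n t := by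
    intro n t ht
    have : f (t + h n) ≤ f t := hanti (hmem' t ht) (hmem t ht n) (by linarith [(hpos n).le])
    have hn0 : (0:ℝ) ≤ (n:ℝ) + 1 := by positivity
    rw [hq]; exact mul_nonneg hn0 (by linarith)
  -- interval integrability helper
  have hii : ∀ x y, x ∈ Set.Icc a (b+1) → y ∈ Set.Icc a (b+1) →
      IntervalIntegrable f volume x y := by
    intro x y hx hy
    exact (hcont.mono (Set.uIcc_subset_Icc hx hy)).intervalIntegrable
  -- bound on each quotient integral
  have hqint : ∀ n, ∫⁻ t in Set.Icc a b, ENNReal.ofReal (q n t) ≤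
      ENNReal.ofReal (f a - f (b + h n)) := by
    intro n
    have hint : IntegrableOn (q n) (Set.Icc a b) := (contq n).integrableOn_Icc
    have heq1 : ∫⁻ t in Set.Icc a b, ENNReal.ofReal (q n t)
        = ENNReal.ofReal (∫ t in Set.Icc a b, q n t) :=
      (ofReal_integral_eq_lintegral_ofReal hint
        ((ae_restrict_iff' measurableSet_Icc).2
          (Eventually.of_forall (hq_nonneg n)))).symm
    rw [heq1]
    apply ENNReal.ofReal_le_ofReal
    -- compute the integral
    have hIf : IntegrableOn f (Set.Icc a b) := contf.integrableOn_Icc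
    have hIs : IntegrableOn (fun t => f (t + h n)) (Set.Icc a b) :=
      (contshift n).integrableOn_Icc
    have hsplit : ∫ t in Set.Icc a b, q n t
        = ((n:ℝ)+1) * ((∫ t in Set.Icc a b, f t) - ∫ t in Set.Icc a b, f (t + h n)) := by
      simp only [hq]
      rw [MeasureTheory.integral_const_mul]
      rw [MeasureTheory.integral_sub hIf hIs]
    rw [hsplit]
    have e1 : (∫ t in Set.Icc a b, f t) = ∫ t in a..b, f t := by
      rw [intervalIntegral.integral_of_le hab, MeasureTheory.integral_Icc_eq_integral_Ioc]
    have e2 : (∫ t in Set.Icc a b, f (t + h n)) = ∫ t in a..b, f (t + h n) := by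
      rw [intervalIntegral.integral_of_le hab, MeasureTheory.integral_Icc_eq_integral_Ioc]
    rw [e1, e2, intervalIntegral.integral_comp_add_right]
    -- memberships
    have ma : a ∈ Set.Icc a (b+1) := ⟨le_refl _, by linarith⟩
    have mah : a + h n ∈ Set.Icc a (b+1) := ⟨by linarith [(hpos n).le], by linarith [hle1 n]⟩
    have mb : b ∈ Set.Icc a (b+1) := ⟨hab, by linarith⟩
    have mbh : b + h n ∈ Set.Icc a (b+1) := ⟨by linarith [(hpos n).le], by linarith [hle1 n]⟩
    -- Chasles
    have c1 : (∫ t in a..(a + h n), f t) + (∫ t in (a + h n)..(b + h n), f t)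
        = ∫ t in a..(b + h n), f t :=
      intervalIntegral.integral_add_adjacent_intervals (hii _ _ ma mah) (hii _ _ mah mbh)
    have c2 : (∫ t in a..b, f t) + (∫ t in b..(b + h n), f t)
        = ∫ t in a..(b + h n), f t :=
      intervalIntegral.integral_add_adjacent_intervals (hii _ _ ma mb) (hii _ _ mb mbh)
    have key : (∫ t in a..b, f t) - (∫ t in (a + h n)..(b + h n), f t)
        = (∫ t in a..(a + h n), f t) - ∫ t in b..(b + h n), f t := by
      linarith
    rw [key]
    -- endpoint bounds
    have bd1 : (∫ t in a..(a + h n), f t) ≤ h n * f a := by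
      have h1 : (∫ t in a..(a + h n), f t) ≤ ∫ _ in a..(a + h n), f a := by
        apply intervalIntegral.integral_mono_on (by linarith [(hpos n).le])
          (hii _ _ ma mah) intervalIntegrable_const
        intro x hx
        exact hanti ma ⟨hx.1, by linarith [hx.2, hle1 n]⟩ hx.1
      calc (∫ t in a..(a + h n), f t) ≤ ∫ _ in a..(a + h n), f a := h1
        _ = (a + h n - a) • f a := intervalIntegral.integral_const _
        _ = h n * f a := by rw [smul_eq_mul]; ring
    have bd2 : h n * f (b + h n) ≤ ∫ t in b..(b + h n), f t := by
      have : (∫ _ in b..(b + h n), f (b + h n)) ≤ ∫ t in b..(b + h n), f t := by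
        apply intervalIntegral.integral_mono_on (by linarith [(hpos n).le])
          intervalIntegrable_const (hii _ _ mb mbh)
        intro x hx
        exact hanti ⟨by linarith [hx.1], by linarith [hx.2, hle1 n]⟩ mbh hx.2
      calc h n * f (b + h n) = (b + h n - b) • f (b + h n) := by rw [smul_eq_mul]; ring
      _ = ∫ _ in b..(b + h n), f (b + h n) := (intervalIntegral.integral_const _).symm
      _ ≤ _ := this
    have hmul : ((n:ℝ)+1) * h n = 1 := by
      rw [hh]; exact mul_inv_cancel₀ (by positivity)
    calc ((n:ℝ)+1) * ((∫ t in a..(a + h n), f t) - ∫ t in b..(b + h n), f t)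
        ≤ ((n:ℝ)+1) * (h n * f a - h n * f (b + h n)) := by
          apply mul_le_mul_of_nonneg_left (by linarith) (by positivity)
      _ = f a - f (b + h n) := by
          rw [mul_sub, ← mul_assoc, ← mul_assoc, hmul, one_mul, one_mul]
  -- Fatou
  have fatou : ∫⁻ t in Set.Icc a b, ENNReal.ofReal (u t) ≤
      atTop.liminf (fun n => ∫⁻ t in Set.Icc a b, ENNReal.ofReal (q n t)) := by
    have step : ∫⁻ t in Set.Icc a b, ENNReal.ofReal (u t) ≤
        ∫⁻ t in Set.Icc a b, atTop.liminf (fun n => ENNReal.ofReal (q n t)) := by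
      apply lintegral_mono_ae
      refine (ae_restrict_iff' measurableSet_Icc).2 (Eventually.of_forall ?_)
      intro t ht
      have hlim : atTop.liminf (fun n => ENNReal.ofReal (q n t))
          = ENNReal.ofReal (-f' t) :=
        ((ENNReal.continuous_ofReal.tendsto _).comp (hpt t ht)).liminf_eq
      rw [hlim]
      exact ENNReal.ofReal_le_ofReal (hu_le t ht)
    refine step.trans (lintegral_liminf_le' ?_)
    intro n
    exact (ENNReal.measurable_ofReal.comp_aemeasurable
      (((contq n).aemeasurable measurableSet_Icc)))
  refine fatou.trans ?_
  have lim2 : Tendsto (fun n => ENNReal.ofReal (f a - f (b + h n))) atTop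
      (𝓝 (ENNReal.ofReal (f a - f b))) := by
    apply (ENNReal.continuous_ofReal.tendsto _).comp
    apply Tendsto.const_sub
    have hb : b ∈ Set.Icc a (b+1) := ⟨hab, by linarith⟩
    have : Tendsto (fun n => b + h n) atTop (𝓝[Set.Icc a (b+1)] b) := by
      rw [tendsto_nhdsWithin_iff]
      constructor
      · simpa using (tendsto_const_nhds.add htend)
      · exact Eventually.of_forall fun n => ⟨by linarith [(hpos n).le], by linarith [hle1 n]⟩
    exact (hcont b hb).tendsto.comp this
  calc atTop.liminf (fun n => ∫⁻ t in Set.Icc a b, ENNReal.ofReal (q n t))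
      ≤ atTop.liminf (fun n => ENNReal.ofReal (f a - f (b + h n))) := by
        apply Filter.liminf_le_liminf (Eventually.of_forall hqint)
    _ = ENNReal.ofReal (f a - f b) := lim2.liminf_eq

set_option maxHeartbeats 1000000 in
/-- Łojasiewicz–Simon convergence: if `σ' = −∇F(σ)` and along the trajectory
`F(σ(t)) ≥ F_∞` together with the gradient inequality
`(F(σ(t)) − F_∞)^{1−θ} ≤ C‖∇F(σ(t))‖`, then the trajectory has finite length
`∫₀^∞ ‖σ'‖ ≤ (C/θ)(F(σ(0)) − F_∞)^θ` and converges to a limit `η`. -/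
theorem lojasiewicz_simon_finite_length_and_convergence
    {H : Type*} [NormedAddCommGroup H] [InnerProductSpace ℝ H] [CompleteSpace H]
    (F : H → ℝ) (σ : ℝ → H) (g : ℝ → H)
    (hgrad : ∀ t : ℝ, 0 ≤ t → HasGradientAt F (g t) (σ t))
    (hflow : ∀ t : ℝ, 0 ≤ t → HasDerivAt σ (-(g t)) t)
    (θ C Finf : ℝ) (hθ : θ ∈ Set.Ioc (0 : ℝ) (1 / 2)) (hC : 0 < C)
    (hlower : ∀ t : ℝ, 0 ≤ t → Finf ≤ F (σ t))
    (hLS : ∀ t : ℝ, 0 ≤ t → (F (σ t) - Finf) ^ (1 - θ) ≤ C * ‖g t‖) :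
    IntegrableOn (fun t => ‖g t‖) (Set.Ioi (0 : ℝ)) ∧
    (∫ t in Set.Ioi (0 : ℝ), ‖g t‖) ≤ (C / θ) * (F (σ 0) - Finf) ^ θ ∧
    ∃ η : H, Tendsto σ atTop (𝓝 η) := by
  obtain ⟨hθ0, hθhalf⟩ := hθ
  set E : ℝ → ℝ := fun t => F (σ t) - Finf with hEdef
  -- derivative of the energy
  have hE' : ∀ t : ℝ, 0 ≤ t → HasDerivAt E (-(‖g t‖^2)) t := by
    intro t ht
    have h1 : HasFDerivAt F ((InnerProductSpace.toDual ℝ H) (g t)) (σ t) :=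
      (hgrad t ht).hasFDerivAt
    have h2 := h1.comp_hasDerivAt t (hflow t ht)
    have h3 : ((InnerProductSpace.toDual ℝ H) (g t)) (-(g t)) = -(‖g t‖^2) := by
      simp [real_inner_self_eq_norm_sq]
    rw [h3] at h2
    exact h2.sub_const Finf
  have hEnonneg : ∀ t : ℝ, 0 ≤ t → 0 ≤ E t := fun t ht => sub_nonneg.2 (hlower t ht)
  have hEcont : ContinuousOn E (Set.Ici 0) := fun t ht =>
    ((hE' t ht).continuousAt).continuousWithinAt
  have hEanti : AntitoneOn E (Set.Ici 0) := by
    apply antitoneOn_of_deriv_nonpos (convex_Ici 0) hEcont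
    · intro t ht
      rw [interior_Ici] at ht
      exact (hE' t ht.le).differentiableAt.differentiableWithinAt
    · intro t ht
      rw [interior_Ici] at ht
      rw [(hE' t ht.le).deriv]
      simp [sq_nonneg]
  -- the Lyapunov function
  set f : ℝ → ℝ := fun t => (C / θ) * (E t ^ θ) with hfdef
  have hCθ : 0 ≤ C / θ := div_nonneg hC.le hθ0.le
  have hfanti : AntitoneOn f (Set.Ici 0) := by
    intro s hs t ht hst
    exact mul_le_mul_of_nonneg_left
      (Real.rpow_le_rpow (hEnonneg t ht) (hEanti hs ht hst) hθ0.le) hCθ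
  have hfcont : ContinuousOn f (Set.Ici 0) := by
    apply continuousOn_const.mul
    exact hEcont.rpow_const fun t ht => Or.inr hθ0.le
  have hfnonneg : ∀ t : ℝ, 0 ≤ t → 0 ≤ f t := fun t ht =>
    mul_nonneg hCθ (Real.rpow_nonneg (hEnonneg t ht) θ)
  set f' : ℝ → ℝ := fun t => -(C * E t ^ (θ - 1) * ‖g t‖^2) with hf'def
  have hfderiv : ∀ t : ℝ, 0 ≤ t → 0 < E t → HasDerivAt f (f' t) t := by
    intro t ht hEt
    have h1 := Real.hasDerivAt_rpow_const (x := E t) (p := θ) (Or.inl hEt.ne')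
    have h2 := h1.comp t (hE' t ht)
    have h3 := h2.const_mul (C / θ)
    convert h3 using 1
    show -(C * E t ^ (θ - 1) * ‖g t‖ ^ 2) = C / θ * (θ * E t ^ (θ - 1) * -‖g t‖ ^ 2)
    field_simp
    all_goals rfl
  -- the key pointwise inequality on the region E > 0
  have keyineq : ∀ t : ℝ, 0 ≤ t → 0 < E t → ‖g t‖ ≤ C * E t ^ (θ - 1) * ‖g t‖^2 := by
    intro t ht hEt
    rcases eq_or_ne (g t) 0 with hg | hg
    · simp [hg]
    · have hEp : 0 < E t ^ (1 - θ) := Real.rpow_pos_of_pos hEt _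
      have hLS' := hLS t ht
      rw [show θ - 1 = -(1 - θ) by ring, Real.rpow_neg hEt.le]
      have heq : C * (E t ^ (1 - θ))⁻¹ * ‖g t‖^2
          = (‖g t‖ * (C * ‖g t‖)) / (E t ^ (1 - θ)) := by
        field_simp
      rw [heq, le_div_iff₀ hEp]
      have h4 : ‖g t‖ * (E t ^ (1 - θ)) ≤ ‖g t‖ * (C * ‖g t‖) :=
        mul_le_mul_of_nonneg_left hLS' (norm_nonneg _)
      linarith
  -- measurable version of the speed
  set G : ℝ → ℝ := fun t => ‖deriv σ t‖ with hGdef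
  have hG : ∀ t : ℝ, 0 ≤ t → G t = ‖g t‖ := by
    intro t ht
    rw [hGdef]
    simp only []
    rw [(hflow t ht).deriv, norm_neg]
  have hGsm : StronglyMeasurable G := (stronglyMeasurable_deriv σ).norm
  have hGnonneg : ∀ t, 0 ≤ G t := fun t => norm_nonneg _
  -- vanishing of g where the energy vanishes
  have hEzero : ∀ t : ℝ, 0 ≤ t → E t = 0 → ∀ s, t ≤ s → E s = 0 := by
    intro t ht hEt s hs
    have h1 : E s ≤ E t := hEanti ht (ht.trans hs) hs
    have h2 : 0 ≤ E s := hEnonneg s (ht.trans hs)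
    linarith
  have hgzero : ∀ t : ℝ, 0 ≤ t → E t = 0 → g t = 0 := by
    intro t ht hEt
    have hd := hE' t ht
    rw [hasDerivAt_iff_tendsto_slope] at hd
    have hd' : Tendsto (slope E t) (𝓝[>] t) (𝓝 (-(‖g t‖^2))) :=
      hd.mono_left (nhdsWithin_mono t fun s hs => ne_of_gt hs)
    have hz : Tendsto (slope E t) (𝓝[>] t) (𝓝 0) := by
      apply Tendsto.congr' _ tendsto_const_nhds
      filter_upwards [self_mem_nhdsWithin] with s hs
      rw [slope_def_field, hEt, hEzero t ht hEt s (le_of_lt hs)]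
      simp
    have := tendsto_nhds_unique hz hd'
    have hn : ‖g t‖^2 = 0 := by linarith
    have hng : ‖g t‖ = 0 := by nlinarith [norm_nonneg (g t)]
    exact norm_eq_zero.1 hng
  -- per-interval bound via lemA
  set M : ENNReal := ENNReal.ofReal (f 0) with hMdef
  have key : ∀ b : ℝ, 0 ≤ b → 0 < E b →
      ∫⁻ t in Set.Icc 0 b, ENNReal.ofReal (G t) ≤ M := by
    intro b hb hEb
    have hEpos : ∀ t ∈ Set.Icc (0:ℝ) b, 0 < E t := fun t htm =>
      lt_of_lt_of_le hEb (hEanti htm.1 hb htm.2)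
    have hsub1 : Set.Icc (0:ℝ) (b+1) ⊆ Set.Ici 0 := fun x hx => hx.1
    have happ := lemA f f' G 0 b hb (hfcont.mono hsub1) (hfanti.mono hsub1)
      (fun t htm => hfderiv t htm.1 (hEpos t htm))
      (fun t _ => hGnonneg t)
      (fun t htm => by
        rw [hG t htm.1, hf'def]
        simp only [neg_neg]
        exact keyineq t htm.1 (hEpos t htm))
    refine happ.trans (ENNReal.ofReal_le_ofReal ?_)
    have := hfnonneg b hb
    linarith
  -- the density measure
  have hGm : Measurable fun t => ENNReal.ofReal (G t) :=
    ENNReal.measurable_ofReal.comp hGsm.measurable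
  set ν : Measure ℝ := volume.withDensity (fun t => ENNReal.ofReal (G t)) with hνdef
  have hν : ∀ s : Set ℝ, MeasurableSet s → ν s = ∫⁻ t in s, ENNReal.ofReal (G t) :=
    fun s hs => withDensity_apply _ hs
  have hmono_union : ∀ (c : ℕ → ℝ), Monotone c →
      ν (⋃ n, Set.Ioc (0:ℝ) (c n)) = ⨆ n, ν (Set.Ioc (0:ℝ) (c n)) := by
    intro c hc
    exact Directed.measure_iUnion
      (Monotone.directed_le fun i j hij => Set.Ioc_subset_Ioc_right (hc hij))
  have keyIoc : ∀ b : ℝ, 0 < b → ν (Set.Ioc 0 b) ≤ M := by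
    intro b hb
    by_cases hEb : 0 < E b
    · rw [hν _ measurableSet_Ioc]
      exact le_trans (lintegral_mono_set Set.Ioc_subset_Icc_self) (key b hb.le hEb)
    · have hEb0 : E b = 0 := le_antisymm (not_lt.1 hEb) (hEnonneg b hb.le)
      set S : Set ℝ := {t | t ∈ Set.Icc (0:ℝ) b ∧ E t = 0} with hSdef
      have hbS : b ∈ S := ⟨⟨hb.le, le_refl b⟩, hEb0⟩
      have hSne : S.Nonempty := ⟨b, hbS⟩
      have hSbdd : BddBelow S := ⟨0, fun x hx => hx.1.1⟩
      set t₀ : ℝ := sInf S with ht₀def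
      have ht₀0 : 0 ≤ t₀ := le_csInf hSne fun x hx => hx.1.1
      have ht₀b : t₀ ≤ b := csInf_le hSbdd hbS
      have hEt₀ : E t₀ = 0 := by
        refine le_antisymm ?_ (hEnonneg t₀ ht₀0)
        by_contra hcon
        push_neg at hcon
        have hpos : 0 < E t₀ := hcon
        have hev : ∀ᶠ s in 𝓝[Set.Ici (0:ℝ)] t₀, 0 < E s :=
          (hEcont t₀ ht₀0).tendsto.eventually (eventually_gt_nhds hpos)
        rw [eventually_nhdsWithin_iff, Metric.eventually_nhds_iff] at hev
        obtain ⟨ε, hε, hevf⟩ := hev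
        obtain ⟨s, hsS, hs⟩ := (csInf_lt_iff hSbdd hSne).1
          (by linarith : sInf S < t₀ + ε)
        have hst : t₀ ≤ s := csInf_le hSbdd hsS
        have hEs : 0 < E s := hevf
          (by rw [Real.dist_eq, abs_lt]; constructor <;> linarith) hsS.1.1
        rw [hsS.2] at hEs; exact lt_irrefl 0 hEs
      have hGz : ∀ t, t₀ < t → G t = 0 := by
        intro t ht
        have ht0 : (0:ℝ) ≤ t := le_of_lt (lt_of_le_of_lt ht₀0 ht)
        rw [hG t ht0, hgzero t ht0 (hEzero t₀ ht₀0 hEt₀ t ht.le), norm_zero]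
      have hν1 : ν (Set.Ioo 0 t₀) ≤ M := by
        rcases eq_or_lt_of_le ht₀0 with h0 | h0
        · rw [← h0]
          simp
        · set c : ℕ → ℝ := fun n => t₀ - t₀ / ((n:ℝ)+1) with hcdef
          have hc0 : ∀ n, 0 ≤ c n := by
            intro n
            have h1 : ((1:ℝ)) ≤ (n:ℝ)+1 := by
              have : (0:ℝ) ≤ (n:ℝ) := Nat.cast_nonneg n
              linarith
            have := div_le_self h0.le h1
            simp only [hcdef]
            linarith
          have hclt : ∀ n, c n < t₀ := by
            intro n
            have hnp : (0:ℝ) < (n:ℝ)+1 := by positivity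
            have := div_pos h0 hnp
            simp only [hcdef]
            linarith
          have hcmono : Monotone c := by
            intro i j hij
            have hij' : ((i:ℝ)+1) ≤ ((j:ℝ)+1) := by
              have : (i:ℝ) ≤ (j:ℝ) := Nat.cast_le.2 hij
              linarith
            have hip : (0:ℝ) < (i:ℝ)+1 := by positivity
            have : t₀ / ((j:ℝ)+1) ≤ t₀ / ((i:ℝ)+1) := by
              apply div_le_div_of_nonneg_left h0.le hip hij'
            simp only [hcdef]
            linarith
          have hcu : (⋃ n, Set.Ioc (0:ℝ) (c n)) = Set.Ioo 0 t₀ := by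
            ext x
            simp only [Set.mem_iUnion, Set.mem_Ioc, Set.mem_Ioo]
            constructor
            · rintro ⟨n, hx1, hx2⟩
              exact ⟨hx1, lt_of_le_of_lt hx2 (hclt n)⟩
            · rintro ⟨hx1, hx2⟩
              obtain ⟨n, hn⟩ := exists_nat_ge (t₀ / (t₀ - x))
              refine ⟨n, hx1, ?_⟩
              have hd : 0 < t₀ - x := by linarith
              have hnp : (0:ℝ) < (n:ℝ)+1 := by positivity
              have hn1 : t₀ / (t₀ - x) ≤ (n:ℝ)+1 := by linarith
              rw [div_le_iff₀ hd] at hn1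
              have h5 : t₀ / ((n:ℝ)+1) ≤ t₀ - x :=
                (div_le_iff₀ hnp).2 (by nlinarith)
              simp only [hcdef]
              linarith
          rw [← hcu, hmono_union c hcmono]
          apply iSup_le
          intro n
          have hEcn : 0 < E (c n) := by
            rcases lt_or_eq_of_le (hEnonneg (c n) (hc0 n)) with h | h
            · exact h
            · exfalso
              have hcS : c n ∈ S := ⟨⟨hc0 n, (hclt n).le.trans ht₀b⟩, h.symm⟩
              exact absurd (csInf_le hSbdd hcS) (not_le.2 (hclt n))
          rw [hν _ measurableSet_Ioc]
          exact (lintegral_mono_set Set.Ioc_subset_Icc_self).trans (key (c n) (hc0 n) hEcn)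
      have hν2 : ν (Set.Ioi t₀) = 0 := by
        rw [hν _ measurableSet_Ioi]
        have hz : ∀ᵐ t ∂volume, t ∈ Set.Ioi t₀ → ENNReal.ofReal (G t) = 0 :=
          Eventually.of_forall fun t ht => by rw [hGz t ht, ENNReal.ofReal_zero]
        rw [setLIntegral_congr_fun_ae measurableSet_Ioi hz, lintegral_zero]
      have hν3 : ν {t₀} = 0 := by
        rw [hν _ (measurableSet_singleton _)]
        rw [Measure.restrict_eq_zero.mpr (Real.volume_singleton), lintegral_zero_measure]
      have hsplit : Set.Ioc (0:ℝ) b ⊆ (Set.Ioo 0 t₀ ∪ {t₀}) ∪ Set.Ioi t₀ := by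
        intro x hx
        rcases lt_trichotomy x t₀ with h | h | h
        · exact Or.inl (Or.inl ⟨hx.1, h⟩)
        · exact Or.inl (Or.inr h)
        · exact Or.inr h
      calc ν (Set.Ioc 0 b) ≤ ν ((Set.Ioo 0 t₀ ∪ {t₀}) ∪ Set.Ioi t₀) := measure_mono hsplit
        _ ≤ (ν (Set.Ioo 0 t₀) + ν {t₀}) + ν (Set.Ioi t₀) :=
            le_trans (measure_union_le _ _) (add_le_add_left (measure_union_le _ _) _)
        _ = ν (Set.Ioo 0 t₀) := by rw [hν2, hν3]; simp
        _ ≤ M := hν1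
  have hmain : ∫⁻ t in Set.Ioi (0:ℝ), ENNReal.ofReal (G t) ≤ M := by
    rw [← hν _ measurableSet_Ioi]
    have hcu : (⋃ n : ℕ, Set.Ioc (0:ℝ) ((n:ℝ)+1)) = Set.Ioi 0 := by
      ext x
      simp only [Set.mem_iUnion, Set.mem_Ioc, Set.mem_Ioi]
      constructor
      · rintro ⟨n, h1, _⟩; exact h1
      · intro hx
        obtain ⟨n, hn⟩ := exists_nat_ge x
        exact ⟨n, hx, by linarith⟩
    rw [← hcu, hmono_union _ (fun i j hij => by
      have : (i:ℝ) ≤ (j:ℝ) := Nat.cast_le.2 hij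
      linarith)]
    exact iSup_le fun n => keyIoc _ (by positivity)
  have hMne : M ≠ ⊤ := ENNReal.ofReal_ne_top
  -- integrability
  have hGInt : IntegrableOn G (Set.Ioi (0:ℝ)) := by
    constructor
    · exact hGsm.aestronglyMeasurable
    · rw [hasFiniteIntegral_iff_ofReal (Eventually.of_forall hGnonneg)]
      exact lt_of_le_of_lt hmain (by rw [hMdef]; exact ENNReal.ofReal_lt_top)
  have hGg : (fun t => ‖g t‖) =ᵐ[volume.restrict (Set.Ioi (0:ℝ))] G :=
    (ae_restrict_iff' measurableSet_Ioi).2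
      (Eventually.of_forall fun t ht => (hG t (le_of_lt ht)).symm)
  have hInt : IntegrableOn (fun t => ‖g t‖) (Set.Ioi (0:ℝ)) := hGInt.congr hGg.symm
  -- the integral bound
  have hIb : (∫ t in Set.Ioi (0:ℝ), ‖g t‖) ≤ (C / θ) * (F (σ 0) - Finf) ^ θ := by
    have h1 : (∫ t in Set.Ioi (0:ℝ), ‖g t‖) = ∫ t in Set.Ioi (0:ℝ), G t :=
      integral_congr_ae hGg
    have h2 : (∫ t in Set.Ioi (0:ℝ), G t)
        = (∫⁻ t in Set.Ioi (0:ℝ), ENNReal.ofReal (G t)).toReal :=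
      integral_eq_lintegral_of_nonneg_ae (Eventually.of_forall hGnonneg)
        hGsm.aestronglyMeasurable
    rw [h1, h2]
    have h3 := ENNReal.toReal_mono hMne hmain
    rw [hMdef, ENNReal.toReal_ofReal (hfnonneg 0 le_rfl)] at h3
    exact h3
  -- convergence
  have hmeasg : AEStronglyMeasurable g (volume.restrict (Set.Ioi (0:ℝ))) := by
    apply AEStronglyMeasurable.congr ((stronglyMeasurable_deriv σ).aestronglyMeasurable.neg)
    exact (ae_restrict_iff' measurableSet_Ioi).2 (Eventually.of_forall fun t ht => by
      show -deriv σ t = g t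
      rw [(hflow t (le_of_lt ht)).deriv, neg_neg])
  have hgInt : IntegrableOn g (Set.Ioi (0:ℝ)) := (integrable_norm_iff hmeasg).1 hInt
  have hgInt1 : IntegrableOn (fun t => -(g t)) (Set.Ioi (1:ℝ)) :=
    (hgInt.mono_set (show Set.Ioi (1:ℝ) ⊆ Set.Ioi 0 from fun x (hx : 1 < x) => (lt_trans zero_lt_one hx : (0:ℝ) < x))).neg
  have hFTC : ∀ x : ℝ, 1 ≤ x → σ x = σ 1 + ∫ t in (1:ℝ)..x, -(g t) := by
    intro x hx
    have hiint : IntervalIntegrable (fun t => -(g t)) volume 1 x := by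
      apply IntegrableOn.intervalIntegrable
      apply Integrable.neg
      apply hgInt.mono_set
      rw [Set.uIcc_of_le hx]
      intro y hy
      exact lt_of_lt_of_le zero_lt_one hy.1
    have hsub := intervalIntegral.integral_eq_sub_of_hasDerivAt
      (f := σ) (f' := fun t => -(g t)) (fun t ht => by
        rw [Set.uIcc_of_le hx] at ht
        exact hflow t (by linarith [ht.1])) hiint
    rw [hsub]
    abel
  have htail : Tendsto (fun x => ∫ t in (1:ℝ)..x, -(g t)) atTop
      (𝓝 (∫ t in Set.Ioi (1:ℝ), -(g t))) :=
    intervalIntegral_tendsto_integral_Ioi 1 hgInt1 tendsto_id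
  have hconv : Tendsto σ atTop (𝓝 (σ 1 + ∫ t in Set.Ioi (1:ℝ), -(g t))) := by
    apply Tendsto.congr' _ (tendsto_const_nhds.add htail)
    filter_upwards [eventually_ge_atTop (1:ℝ)] with x hx
    exact (hFTC x hx).symm
  exact ⟨hInt, hIb, ⟨_, hconv⟩⟩
end
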